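/- For all real numbers x, y with 0 < x < y, one has |R(x)/x - R(y)/y| ≤ (y-x)·((√π/4) x^{-3/2} + (4/e²) x^{-2}). In particular, there exists a real constant A such that |R(x)/x - R(y)/y| ≤ A (y-x) x^{-3/2} for all 0 < x < y. -/

import Mathlib

/-- The real value of the Riemann zeta function at a real argument. -/
noncomputable def zetaR (s : ℝ) : ℝ := (riemannZeta (s : ℂ)).re

/-- The Riesz function `R(x) = x ∑_{k=0}^∞ (-1)^k x^k / (k! ζ(2k+2))`. -/
noncomputable def RieszR (x : ℝ) : ℝ :=
  x * ∑' k : ℕ, (-1 : ℝ) ^ k * x ^ k / (k.factorial * zetaR (2 * k + 2))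

namespace RieszAux
open Real Set MeasureTheory

noncomputable def mu (n : ℕ) : ℝ := (ArithmeticFunction.moebius n : ℝ)

lemma mu_zero : mu 0 = 0 := by simp [mu]

lemma abs_mu_le_one (n : ℕ) : |mu n| ≤ 1 := by
  have h := ArithmeticFunction.abs_moebius_le_one (n := n)
  unfold mu
  calc |((ArithmeticFunction.moebius n : ℤ) : ℝ)| = ((|ArithmeticFunction.moebius n| : ℤ) : ℝ) := by
        rw [Int.cast_abs]
      _ ≤ 1 := by exact_mod_cast h

lemma riemannZeta_real {s : ℝ} (hs : 1 < s) :
    riemannZeta (s : ℂ) = ((zetaR s : ℝ) : ℂ) := by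
  have h : riemannZeta (s : ℂ) = ((∑' n : ℕ, 1 / ((n : ℝ) + 1) ^ s : ℝ) : ℂ) := by
    rw [zeta_eq_tsum_one_div_nat_add_one_cpow (by simpa using hs), Complex.ofReal_tsum]
    refine tsum_congr fun n => ?_
    rw [Complex.ofReal_div, Complex.ofReal_one, Complex.ofReal_cpow (by positivity)]
    norm_num
  rw [h]
  unfold zetaR
  rw [h, Complex.ofReal_re]

lemma abs_term_le {m : ℕ} (hm : 2 ≤ m) (n : ℕ) :
    |mu n / (n : ℝ) ^ m| ≤ (((n : ℝ)) ^ 2)⁻¹ := by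
  rcases Nat.eq_zero_or_pos n with rfl | hn
  · simp [mu_zero]
  · have h1 : (1 : ℝ) ≤ (n : ℝ) := by exact_mod_cast hn
    rw [abs_div, abs_of_nonneg (by positivity : (0:ℝ) ≤ (n:ℝ) ^ m)]
    rw [div_le_iff₀ (by positivity)]
    have hnn : (0:ℝ) < (n:ℝ) := by exact_mod_cast hn
    have : ((n : ℝ) ^ 2)⁻¹ * (n : ℝ) ^ m = (n : ℝ) ^ (m - 2) := by
      rw [inv_mul_eq_div, eq_comm, pow_sub₀ _ hnn.ne' hm]
      ring
    rw [this]
    exact (abs_mu_le_one n).trans (one_le_pow₀ h1)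

lemma summable_mu_div_pow {m : ℕ} (hm : 2 ≤ m) :
    Summable (fun n : ℕ => mu n / (n : ℝ) ^ m) := by
  refine Summable.of_abs (Summable.of_nonneg_of_le (fun n => abs_nonneg _)
    (abs_term_le hm) ?_)
  exact (Real.summable_nat_pow_inv).2 one_lt_two

lemma zetaR_inv (k : ℕ) :
    (zetaR (2 * (k : ℝ) + 2))⁻¹ = ∑' n : ℕ, mu n / (n : ℝ) ^ (2 * k + 2) := by
  have hk0 : (0:ℝ) ≤ (k:ℝ) := Nat.cast_nonneg k
  have hsr : (1 : ℝ) < 2 * (k : ℝ) + 2 := by linarith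
  have hcast : ((2 * (k : ℝ) + 2 : ℝ) : ℂ) = ((2 * k + 2 : ℕ) : ℂ) := by push_cast; ring
  have hre : 1 < (((2 * k + 2 : ℕ) : ℂ)).re := by
    rw [Complex.natCast_re]
    exact_mod_cast Nat.lt_of_lt_of_le one_lt_two (by omega)
  -- L μ s = (riemannZeta ((2 * k + 2 : ℕ) : ℂ))⁻¹
  have h1 : LSeries 1 ((2 * k + 2 : ℕ) : ℂ) * LSeries (fun n => ((ArithmeticFunction.moebius n : ℤ) : ℂ)  ) ((2 * k + 2 : ℕ) : ℂ) = 1 :=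
    LSeries_one_mul_Lseries_moebius hre
  rw [LSeries_one_eq_riemannZeta hre] at h1
  have hzne : riemannZeta ((2 * k + 2 : ℕ) : ℂ) ≠ 0 := riemannZeta_ne_zero_of_one_lt_re hre
  have h2 : LSeries (fun n => ((ArithmeticFunction.moebius n : ℤ) : ℂ)  ) ((2 * k + 2 : ℕ) : ℂ)
      = (riemannZeta ((2 * k + 2 : ℕ) : ℂ))⁻¹ := by
    rw [mul_comm] at h1
    exact eq_inv_of_mul_eq_one_left h1
  -- rewrite LSeries as ofReal of the real series
  have h3 : LSeries (fun n => ((ArithmeticFunction.moebius n : ℤ) : ℂ)  ) ((2 * k + 2 : ℕ) : ℂ)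
      = ((∑' n : ℕ, mu n / (n : ℝ) ^ (2 * k + 2) : ℝ) : ℂ) := by
    rw [Complex.ofReal_tsum]
    refine tsum_congr fun n => ?_
    rcases Nat.eq_zero_or_pos n with rfl | hn
    · simp [LSeries.term, mu_zero]
    · rw [LSeries.term_of_ne_zero (Nat.pos_iff_ne_zero.mp hn), Complex.cpow_natCast]
      unfold mu
      push_cast
      ring
  have h4 : riemannZeta ((2 * k + 2 : ℕ) : ℂ) = ((zetaR (2 * (k : ℝ) + 2) : ℝ) : ℂ) := by
    rw [← hcast, riemannZeta_real hsr]
  rw [h4, h3, ← Complex.ofReal_inv] at h2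
  exact_mod_cast h2.symm

end RieszAux

namespace RieszAux
open Real Set MeasureTheory

lemma exp_tsum (t : ℝ) : Real.exp t = ∑' k : ℕ, t ^ k / k.factorial := by
  rw [Real.exp_eq_exp_ℝ, NormedSpace.exp_eq_tsum_div]

lemma inv_sq_le_one (n : ℕ) : (((n:ℝ)) ^ 2)⁻¹ ≤ 1 := by
  rcases Nat.eq_zero_or_pos n with rfl | hn
  · norm_num
  · have h1 : (1:ℝ) ≤ (n:ℝ) := by exact_mod_cast hn
    rw [inv_le_one_iff₀]
    right
    nlinarith

/-- The summand of the double series. -/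
noncomputable def F (x : ℝ) (k n : ℕ) : ℝ :=
  (-1:ℝ)^k * x^k / k.factorial * (mu n / (n:ℝ) ^ (2*k+2))

lemma abs_F_eq {x : ℝ} (hx : 0 ≤ x) (k n : ℕ) :
    |F x k n| = x^k / k.factorial * |mu n / (n:ℝ) ^ (2*k+2)| := by
  rw [F, abs_mul]
  congr 1
  rw [abs_div, abs_mul, abs_pow, abs_pow, abs_neg, abs_one, one_pow, one_mul,
    abs_of_nonneg hx, Nat.abs_cast]

lemma summable_absF {x : ℝ} (hx : 0 ≤ x) :
    Summable (fun p : ℕ × ℕ => |F x p.1 p.2|) := by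
  set Z : ℝ := ∑' n : ℕ, (((n:ℝ)) ^ 2)⁻¹ with hZ
  have hZs : Summable (fun n : ℕ => (((n:ℝ)) ^ 2)⁻¹) := Real.summable_nat_pow_inv.2 one_lt_two
  rw [summable_prod_of_nonneg (fun p => abs_nonneg _)]
  constructor
  · intro k
    simp only [abs_F_eq hx]
    exact ((summable_mu_div_pow (by omega)).abs.mul_left _)
  · refine Summable.of_nonneg_of_le (fun k => tsum_nonneg fun n => abs_nonneg _) (fun k => ?_)
      ((Real.summable_pow_div_factorial x).mul_right Z)
    simp only [abs_F_eq hx]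
    rw [tsum_mul_left]
    refine mul_le_mul_of_nonneg_left ?_ (by positivity)
    exact Summable.tsum_le_tsum (abs_term_le (by omega)) ((summable_mu_div_pow (by omega)).abs) hZs

lemma summable_F_right {x : ℝ} (hx : 0 ≤ x) (n : ℕ) : Summable (fun k => F x k n) := by
  refine Summable.of_abs (Summable.of_nonneg_of_le (fun k => abs_nonneg _) (fun k => ?_)
    (Real.summable_pow_div_factorial x))
  rw [abs_F_eq hx]
  calc x ^ k / ↑k.factorial * |mu n / (n:ℝ) ^ (2*k+2)|
      ≤ x ^ k / ↑k.factorial * (((n:ℝ))^2)⁻¹ :=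
        mul_le_mul_of_nonneg_left (abs_term_le (by omega) n) (by positivity)
    _ ≤ x ^ k / ↑k.factorial * 1 :=
        mul_le_mul_of_nonneg_left (inv_sq_le_one n) (by positivity)
    _ = x ^ k / ↑k.factorial := mul_one _

lemma riesz_repr {x : ℝ} (hx : 0 < x) :
    RieszR x / x = ∑' n : ℕ, mu n / (n:ℝ)^2 * Real.exp (-x / (n:ℝ)^2) := by
  have h0 : RieszR x / x
      = ∑' k : ℕ, (-1:ℝ)^k * x^k / (k.factorial * zetaR (2*k+2)) := by
    unfold RieszR
    rw [mul_div_cancel_left₀ _ hx.ne']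
  rw [h0]
  have h1 : ∀ k : ℕ, (-1:ℝ)^k * x^k / (k.factorial * zetaR (2*k+2))
      = ∑' n : ℕ, F x k n := by
    intro k
    have : (-1:ℝ)^k * x^k / (k.factorial * zetaR (2*k+2))
        = (-1:ℝ)^k * x^k / k.factorial * (zetaR (2*(k:ℝ)+2))⁻¹ := by
      field_simp
    rw [this, zetaR_inv k, ← tsum_mul_left]
    rfl
  simp_rw [h1]
  have hleft : ∀ k : ℕ, Summable (fun n => F x k n) := by
    intro k
    unfold F
    exact (summable_mu_div_pow (by omega)).mul_left _
  have hswap := Summable.tsum_comm' (f := F x) (Summable.of_abs (summable_absF hx.le)) hleft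
    (summable_F_right hx.le)
  rw [← hswap]
  refine tsum_congr fun n => ?_
  rcases Nat.eq_zero_or_pos n with rfl | hn
  · simp [F, mu_zero]
  · have hn0 : ((n:ℝ)) ≠ 0 := by positivity
    have hterm : ∀ k : ℕ, F x k n = mu n / (n:ℝ)^2 * ((-x/(n:ℝ)^2)^k / k.factorial) := by
      intro k
      rw [F, div_pow, neg_pow x]
      field_simp
      ring
    simp_rw [hterm]
    rw [tsum_mul_left, ← exp_tsum]

end RieszAux

namespace RieszAux
open Real Set MeasureTheory

/-- comparison function `g x t = t⁻⁴ e^{-x/t²}`. -/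
noncomputable def g (x t : ℝ) : ℝ := ((t ^ 4)⁻¹) * Real.exp (-x / t ^ 2)

lemma g_zero (x : ℝ) : g x 0 = 0 := by simp [g]

lemma g_nonneg (x t : ℝ) : 0 ≤ g x t := by
  unfold g; positivity

lemma sq_exp_le (u : ℝ) (hu : 0 ≤ u) : u ^ 2 * Real.exp (-u) ≤ 4 * Real.exp (-2) := by
  have h1 : u / 2 ≤ Real.exp (u / 2 - 1) := by
    have := Real.add_one_le_exp (u / 2 - 1)
    linarith
  have h2 : (u / 2) ^ 2 ≤ Real.exp (u / 2 - 1) ^ 2 := by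
    apply pow_le_pow_left₀ (by positivity) h1
  have h3 : Real.exp (u / 2 - 1) ^ 2 = Real.exp (u - 2) := by
    rw [← Real.exp_nat_mul]
    norm_num
    ring_nf
  rw [h3] at h2
  have h4 : Real.exp (u - 2) = Real.exp u * Real.exp (-2) := by
    rw [← Real.exp_add]; ring_nf
  have h5 : u ^ 2 ≤ 4 * (Real.exp u * Real.exp (-2)) := by
    rw [← h4]; nlinarith
  calc u ^ 2 * Real.exp (-u) ≤ 4 * (Real.exp u * Real.exp (-2)) * Real.exp (-u) := by
        apply mul_le_mul_of_nonneg_right h5 (Real.exp_nonneg _)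
    _ = 4 * Real.exp (-2) * (Real.exp u * Real.exp (-u)) := by ring
    _ = 4 * Real.exp (-2) := by rw [← Real.exp_add]; simp

lemma g_eq {x t : ℝ} (hx : 0 < x) (ht : t ≠ 0) :
    g x t = (x / t ^ 2) ^ 2 * Real.exp (-(x / t ^ 2)) / x ^ 2 := by
  unfold g
  rw [neg_div]
  field_simp

lemma g_le_M {x : ℝ} (hx : 0 < x) (t : ℝ) : g x t ≤ 4 * Real.exp (-2) / x ^ 2 := by
  rcases eq_or_ne t 0 with rfl | ht
  · rw [g_zero]; positivity
  · rw [g_eq hx ht]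
    have h := sq_exp_le (x / t ^ 2) (by positivity)
    have hx2 : (0:ℝ) < x ^ 2 := by positivity
    exact (div_le_div_iff_of_pos_right hx2).2 h

-- decreasing branch of u ↦ u² e^{-u} beyond 2
lemma sq_exp_anti {u v : ℝ} (hv : 2 ≤ v) (huv : v ≤ u) :
    u ^ 2 * Real.exp (-u) ≤ v ^ 2 * Real.exp (-v) := by
  have hv0 : 0 < v := by linarith
  have hd : 0 ≤ u - v := by linarith
  have h1 : u ≤ v * Real.exp ((u - v) / 2) := by
    have e1 : 1 + (u - v) / 2 ≤ Real.exp ((u - v) / 2) := by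
      have := Real.add_one_le_exp ((u - v) / 2); linarith
    have e2 : u ≤ v * (1 + (u - v) / 2) := by nlinarith
    calc u ≤ v * (1 + (u - v) / 2) := e2
      _ ≤ v * Real.exp ((u - v) / 2) := by
        apply mul_le_mul_of_nonneg_left e1 hv0.le
  have h2 : u ^ 2 ≤ v ^ 2 * Real.exp (u - v) := by
    have := pow_le_pow_left₀ (by linarith : (0:ℝ) ≤ u) h1 2
    calc u ^ 2 ≤ (v * Real.exp ((u-v)/2)) ^ 2 := this
      _ = v ^ 2 * (Real.exp ((u-v)/2) * Real.exp ((u-v)/2)) := by ring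
      _ = v ^ 2 * Real.exp (u - v) := by rw [← Real.exp_add]; ring_nf
  calc u ^ 2 * Real.exp (-u) ≤ v ^ 2 * Real.exp (u - v) * Real.exp (-u) := by
        apply mul_le_mul_of_nonneg_right h2 (Real.exp_nonneg _)
    _ = v ^ 2 * (Real.exp (u - v) * Real.exp (-u)) := by ring
    _ = v ^ 2 * Real.exp (-v) := by rw [← Real.exp_add]; ring_nf

-- increasing branch on (0, 2]
lemma sq_exp_mono {u v : ℝ} (hv0 : 0 < v) (hvu : v ≤ u) (hu : u ≤ 2) :
    v ^ 2 * Real.exp (-v) ≤ u ^ 2 * Real.exp (-u) := by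
  have hu0 : 0 < u := lt_of_lt_of_le hv0 hvu
  have h1 : v ≤ u * Real.exp (-((u - v) / 2)) := by
    have e0 : (u - v) / u ≤ 1 := by
      rw [div_le_one hu0]; linarith
    have e1 : 1 - (u - v) / u ≤ Real.exp (-((u - v) / u)) := by
      have := Real.add_one_le_exp (-((u - v) / u)); linarith
    have e2 : Real.exp (-((u - v) / u)) ≤ Real.exp (-((u - v) / 2)) := by
      apply Real.exp_le_exp.2
      rw [neg_le_neg_iff]
      exact div_le_div_of_nonneg_left (by linarith) hu0 hu
    have e3 : v = u * (1 - (u - v) / u) := by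
      field_simp
      ring
    calc v = u * (1 - (u - v) / u) := e3
      _ ≤ u * Real.exp (-((u - v) / 2)) :=
        mul_le_mul_of_nonneg_left (e1.trans e2) hu0.le
  have h2 : v ^ 2 ≤ u ^ 2 * Real.exp (-(u - v)) := by
    have := pow_le_pow_left₀ hv0.le h1 2
    calc v ^ 2 ≤ (u * Real.exp (-((u - v) / 2))) ^ 2 := this
      _ = u ^ 2 * (Real.exp (-((u-v)/2)) * Real.exp (-((u-v)/2))) := by ring
      _ = u ^ 2 * Real.exp (-(u - v)) := by rw [← Real.exp_add]; ring_nf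
  calc v ^ 2 * Real.exp (-v) ≤ u ^ 2 * Real.exp (-(u - v)) * Real.exp (-v) := by
        apply mul_le_mul_of_nonneg_right h2 (Real.exp_nonneg _)
    _ = u ^ 2 * (Real.exp (-(u - v)) * Real.exp (-v)) := by ring
    _ = u ^ 2 * Real.exp (-u) := by rw [← Real.exp_add]; ring_nf
end RieszAux

namespace RieszAux
open Real Set MeasureTheory

lemma two_le_div {x t : ℝ} (hx : 0 < x) (ht : 0 < t) (h : t ≤ Real.sqrt (x / 2)) :
    2 ≤ x / t ^ 2 := by
  have h2 : t ^ 2 ≤ x / 2 := by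
    have := pow_le_pow_left₀ ht.le h 2
    rwa [sq_sqrt (by positivity : (0:ℝ) ≤ x / 2)] at this
  rw [le_div_iff₀ (by positivity)]
  linarith

lemma div_le_two {x t : ℝ} (hx : 0 < x) (ht : 0 < t) (h : Real.sqrt (x / 2) ≤ t) :
    x / t ^ 2 ≤ 2 := by
  have h2 : x / 2 ≤ t ^ 2 := by
    have := pow_le_pow_left₀ (Real.sqrt_nonneg _) h 2
    rwa [sq_sqrt (by positivity : (0:ℝ) ≤ x / 2)] at this
  rw [div_le_iff₀ (by positivity)]
  linarith

lemma g_mono_Icc {x a b : ℝ} (hx : 0 < x) (ha : 0 < a) (hb : b ≤ Real.sqrt (x / 2)) :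
    MonotoneOn (g x) (Icc a b) := by
  intro s hs t ht hst
  have hs0 : 0 < s := lt_of_lt_of_le ha hs.1
  have ht0 : 0 < t := lt_of_lt_of_le hs0 hst
  rw [g_eq hx hs0.ne', g_eq hx ht0.ne']
  have hcore : (x / s ^ 2) ^ 2 * Real.exp (-(x / s ^ 2))
      ≤ (x / t ^ 2) ^ 2 * Real.exp (-(x / t ^ 2)) := by
    apply sq_exp_anti (two_le_div hx ht0 (ht.2.trans hb))
    apply div_le_div_of_nonneg_left hx.le (by positivity)
    exact pow_le_pow_left₀ hs0.le hst 2
  exact (div_le_div_iff_of_pos_right (by positivity)).2 hcore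

lemma g_anti_Icc {x a b : ℝ} (hx : 0 < x) (ha : 0 < a) (hb : Real.sqrt (x / 2) ≤ a) :
    AntitoneOn (g x) (Icc a b) := by
  intro s hs t ht hst
  have hs0 : 0 < s := lt_of_lt_of_le ha hs.1
  have ht0 : 0 < t := lt_of_lt_of_le hs0 hst
  rw [g_eq hx hs0.ne', g_eq hx ht0.ne']
  have hcore : (x / t ^ 2) ^ 2 * Real.exp (-(x / t ^ 2))
      ≤ (x / s ^ 2) ^ 2 * Real.exp (-(x / s ^ 2)) := by
    apply sq_exp_mono (by positivity) ?_ (div_le_two hx hs0 (hb.trans hs.1))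
    apply div_le_div_of_nonneg_left hx.le (by positivity)
    exact pow_le_pow_left₀ hs0.le hst 2
  exact (div_le_div_iff_of_pos_right (by positivity)).2 hcore

lemma g_contOn (x : ℝ) : ContinuousOn (g x) {t : ℝ | t ≠ 0} := by
  unfold g
  apply ContinuousOn.mul
  · exact ContinuousOn.inv₀ ((continuous_pow 4).continuousOn)
      (fun t ht => pow_ne_zero _ ht)
  · apply Real.continuous_exp.comp_continuousOn
    exact ContinuousOn.div continuousOn_const ((continuous_pow 2).continuousOn)
      (fun t ht => pow_ne_zero _ ht)

lemma g_intInt {x a b : ℝ} (ha : 0 < a) (hab : a ≤ b) :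
    IntervalIntegrable (g x) volume a b := by
  apply ContinuousOn.intervalIntegrable
  apply (g_contOn x).mono
  intro t ht
  rw [uIcc_of_le hab] at ht
  exact ne_of_gt (lt_of_lt_of_le ha ht.1)

lemma g_measurable (x : ℝ) : Measurable (g x) := by
  unfold g
  fun_prop

lemma g_exp_le_one {x t : ℝ} (hx : 0 < x) (ht : 0 < t) : Real.exp (-x / t ^ 2) ≤ 1 := by
  apply Real.exp_le_one_iff.2  
  rw [neg_div]
  simp only [neg_nonpos]
  positivity

lemma g_integrableOn {x : ℝ} (hx : 0 < x) : IntegrableOn (g x) (Ioi 0) volume := by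
  have h1 : IntegrableOn (g x) (Ioc 0 1) volume := by
    apply Measure.integrableOn_of_bounded measure_Ioc_lt_top.ne
      ((g_measurable x).aestronglyMeasurable)
    refine ae_of_all _ fun t => ?_
    rw [Real.norm_eq_abs, abs_of_nonneg (g_nonneg x t)]
    exact g_le_M hx t
  have h2 : IntegrableOn (g x) (Ioi 1) volume := by
    apply Integrable.mono' (integrableOn_Ioi_rpow_of_lt (by norm_num : (-4:ℝ) < -1) one_pos)
      ((g_measurable x).aestronglyMeasurable)
    refine (ae_restrict_iff' measurableSet_Ioi).2 (ae_of_all _ fun t ht => ?_)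
    have ht0 : (0:ℝ) < t := lt_trans one_pos ht
    rw [Real.norm_eq_abs, abs_of_nonneg (g_nonneg x t)]
    have : t ^ (-4 : ℝ) = (t ^ (4:ℕ))⁻¹ := by
      rw [← Real.rpow_natCast t 4, ← Real.rpow_neg ht0.le]
      norm_num
    rw [this]
    unfold g
    calc (t ^ 4)⁻¹ * Real.exp (-x / t ^ 2) ≤ (t ^ 4)⁻¹ * 1 :=
          mul_le_mul_of_nonneg_left (g_exp_le_one hx ht0) (by positivity)
      _ = (t ^ 4)⁻¹ := mul_one _
  have := h1.union h2
  rwa [Ioc_union_Ioi_eq_Ioi zero_le_one] at this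

end RieszAux

namespace RieszAux
open Real Set MeasureTheory

lemma rpow_neg_nat {t : ℝ} (ht : 0 < t) (n : ℕ) : t ^ (-(n:ℝ)) = (t ^ n)⁻¹ := by
  rw [Real.rpow_neg ht.le, Real.rpow_natCast]

lemma g_integral {x : ℝ} (hx : 0 < x) :
    ∫ t in Ioi (0:ℝ), g x t = Real.sqrt Real.pi / 4 * x ^ (-(3:ℝ)/2) := by
  set G : ℝ → ℝ := fun y => (1/2) * y ^ ((1:ℝ)/2) * Real.exp (-(x * y)) with hG
  -- Step A : substitution y = t ^ (-2)
  have hA : ∫ t in Ioi (0:ℝ), g x t = ∫ y in Ioi (0:ℝ), G y := by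
    rw [← integral_comp_rpow_Ioi G (p := (-2:ℝ)) (by norm_num)]
    refine setIntegral_congr_fun measurableSet_Ioi fun t ht => ?_
    have ht0 : (0:ℝ) < t := ht
    have h2 : t ^ (-2:ℝ) = (t ^ 2)⁻¹ := by
      rw [show (-2:ℝ) = -((2:ℕ):ℝ) by norm_num, rpow_neg_nat ht0]
    have h3 : ((-2:ℝ) - 1) = -((3:ℕ):ℝ) := by norm_num
    have h4 : (t ^ (-2:ℝ)) ^ ((1:ℝ)/2) = t⁻¹ := by
      rw [← Real.rpow_mul ht0.le]
      norm_num
      exact Real.rpow_neg_one t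
    rw [smul_eq_mul, hG]
    simp only []
    rw [h3, rpow_neg_nat ht0 3, h4, h2]
    unfold g
    rw [abs_of_nonpos (by norm_num : (-2:ℝ) ≤ 0)]
    have hexp : -(x * (t ^ 2)⁻¹) = -x / t ^ 2 := by
      rw [neg_div, div_eq_mul_inv]
    rw [hexp]
    field_simp
  -- Step B : scaling z = x * y
  have hB : ∫ y in Ioi (0:ℝ), G y
      = x ^ (-(1:ℝ)/2) * (x⁻¹ * ∫ z in Ioi (0:ℝ), (1/2) * z ^ ((1:ℝ)/2) * Real.exp (-z)) := by
    have hscale := integral_comp_mul_left_Ioi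
      (g := fun z => (1/2) * z ^ ((1:ℝ)/2) * Real.exp (-z)) 0 hx
    rw [mul_zero] at hscale
    rw [smul_eq_mul] at hscale
    rw [← hscale, ← integral_const_mul]
    refine setIntegral_congr_fun measurableSet_Ioi fun y hy => ?_
    have hy0 : (0:ℝ) < y := hy
    simp only [hG]
    rw [Real.mul_rpow hx.le hy0.le]
    rw [show x ^ (-(1:ℝ)/2) = (x ^ ((1:ℝ)/2))⁻¹ by
      rw [← Real.rpow_neg hx.le]; norm_num]
    have hxr : x ^ ((1:ℝ)/2) ≠ 0 := by
      positivity
    field_simp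
  -- Step C : Gamma value
  have hC : ∫ z in Ioi (0:ℝ), (1/2) * z ^ ((1:ℝ)/2) * Real.exp (-z)
      = Real.sqrt Real.pi / 4 := by
    have h1 : ∫ z in Ioi (0:ℝ), (1/2) * z ^ ((1:ℝ)/2) * Real.exp (-z)
        = (1/2) * ∫ z in Ioi (0:ℝ), Real.exp (-z) * z ^ ((3:ℝ)/2 - 1) := by
      rw [← integral_const_mul]
      refine setIntegral_congr_fun measurableSet_Ioi fun z hz => ?_
      norm_num
      ring
    rw [h1, ← Real.Gamma_eq_integral (by norm_num : (0:ℝ) < 3/2)]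
    have h32 : (3:ℝ)/2 = 1/2 + 1 := by norm_num
    rw [h32, Real.Gamma_add_one (by norm_num : (1/2:ℝ) ≠ 0), Real.Gamma_one_half_eq]
    ring
  rw [hA, hB, hC]
  rw [show x⁻¹ = x ^ (-(1:ℝ)) by rw [Real.rpow_neg_one]]
  rw [show x ^ (-(1:ℝ)/2) * (x ^ (-(1:ℝ)) * (Real.sqrt Real.pi / 4))
      = Real.sqrt Real.pi / 4 * (x ^ (-(1:ℝ)/2) * x ^ (-(1:ℝ))) by ring]
  rw [← Real.rpow_add hx]
  norm_num

end RieszAux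

namespace RieszAux
open Real Set MeasureTheory

lemma g_le_inv_pow {x : ℝ} (hx : 0 < x) (n : ℕ) : g x n ≤ (((n:ℝ)) ^ 4)⁻¹ := by
  rcases Nat.eq_zero_or_pos n with rfl | hn
  · simp [g]
  · have hn0 : (0:ℝ) < (n:ℝ) := by exact_mod_cast hn
    unfold g
    calc ((((n:ℝ)) ^ 4)⁻¹) * Real.exp (-x / (n:ℝ) ^ 2)
        ≤ (((n:ℝ)) ^ 4)⁻¹ * 1 :=
          mul_le_mul_of_nonneg_left (g_exp_le_one hx hn0) (by positivity)
      _ = (((n:ℝ)) ^ 4)⁻¹ := mul_one _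

lemma summable_g {x : ℝ} (hx : 0 < x) : Summable (fun n : ℕ => g x n) :=
  Summable.of_nonneg_of_le (fun n => g_nonneg x n) (g_le_inv_pow hx)
    (Real.summable_nat_pow_inv.2 (by norm_num))

lemma int_le_I {x a b : ℝ} (hx : 0 < x) (ha : 0 < a) (hab : a ≤ b) :
    ∫ t in a..b, g x t ≤ ∫ t in Ioi (0:ℝ), g x t := by
  rw [intervalIntegral.integral_of_le hab]
  apply setIntegral_mono_set (g_integrableOn hx)
    (ae_of_all _ (fun t => g_nonneg x t))
  apply HasSubset.Subset.eventuallyLE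
  intro t ht
  exact lt_trans ha ht.1

lemma middle {x a : ℝ} (hx : 0 < x) (ha : 0 < a) (hac : a ≤ Real.sqrt (x/2))
    (hca : Real.sqrt (x/2) ≤ a + 1) :
    g x a + g x (a+1) ≤ 4 * Real.exp (-2) / x ^ 2 + ∫ t in a..(a+1), g x t := by
  set c := Real.sqrt (x/2) with hc
  set M := 4 * Real.exp (-2) / x ^ 2 with hM
  have hc0 : 0 < c := lt_of_lt_of_le ha hac
  have i1 : (c - a) * g x a ≤ ∫ t in a..c, g x t := by
    have e : ∫ _ in a..c, (g x a) = (c - a) * g x a := by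
      rw [intervalIntegral.integral_const, smul_eq_mul]
    rw [← e]
    apply intervalIntegral.integral_mono_on hac intervalIntegrable_const
      (g_intInt ha hac)
    intro t htm
    exact g_mono_Icc hx ha (le_refl c) (left_mem_Icc.2 hac) htm htm.1
  have i2 : (a + 1 - c) * g x (a+1) ≤ ∫ t in c..(a+1), g x t := by
    have e : ∫ _ in c..(a+1), (g x (a+1)) = (a + 1 - c) * g x (a+1) := by
      rw [intervalIntegral.integral_const, smul_eq_mul]
    rw [← e]
    apply intervalIntegral.integral_mono_on hca intervalIntegrable_const
      (g_intInt hc0 hca)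
    intro t htm
    exact g_anti_Icc hx hc0 (le_refl c) htm (right_mem_Icc.2 hca) htm.2
  have i3 : (∫ t in a..c, g x t) + (∫ t in c..(a+1), g x t) = ∫ t in a..(a+1), g x t :=
    intervalIntegral.integral_add_adjacent_intervals (g_intInt ha hac) (g_intInt hc0 hca)
  have h5 : (a + 1 - c) * g x a ≤ (a + 1 - c) * M :=
    mul_le_mul_of_nonneg_left (g_le_M hx a) (by linarith)
  have h6 : (c - a) * g x (a+1) ≤ (c - a) * M :=
    mul_le_mul_of_nonneg_left (g_le_M hx (a+1)) (by linarith)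
  have key : g x a + g x (a+1)
      - ((c - a) * g x a + (a + 1 - c) * g x (a+1))
      - ((a + 1 - c) * g x a + (c - a) * g x (a+1)) = 0 := by ring
  have hMsplit : (a + 1 - c) * M + (c - a) * M = M := by ring
  linarith [i1, i2, h5, h6]

lemma sum_g_le {x : ℝ} (hx : 0 < x) :
    ∑' n : ℕ, g x (n:ℝ)
      ≤ (∫ t in Ioi (0:ℝ), g x t) + 4 * Real.exp (-2) / x ^ 2 := by
  set c := Real.sqrt (x / 2) with hc
  have hc0 : 0 < c := Real.sqrt_pos.2 (by positivity)
  set K := ⌊c⌋₊ with hK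
  set M := 4 * Real.exp (-2) / x ^ 2 with hM
  set I := ∫ t in Ioi (0:ℝ), g x t with hI
  apply Summable.tsum_le_of_sum_range_le (summable_g hx)
  suffices H : ∀ N, K + 2 ≤ N → ∑ i ∈ Finset.range N, g x i ≤ I + M by
    intro N
    rcases le_or_gt N (K+2) with h | h
    · calc ∑ i ∈ Finset.range N, g x i
          ≤ ∑ i ∈ Finset.range (K+2), g x i :=
            Finset.sum_le_sum_of_subset_of_nonneg (Finset.range_subset_range.2 h)
              (fun i _ _ => g_nonneg x i)
        _ ≤ I + M := H (K+2) le_rfl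
    · exact H N h.le
  intro N hN
  have hKc : (K:ℝ) ≤ c := Nat.floor_le hc0.le
  have hcK1 : c < (K:ℝ) + 1 := Nat.lt_floor_add_one c
  -- the antitone tail bound, valid whenever c ≤ (m : ℝ), m ≥ 1, m + 1 ≤ N
  have tail : ∀ m : ℕ, 1 ≤ m → c ≤ (m:ℝ) → m + 1 ≤ N →
      ∑ i ∈ Finset.Ico (m+1) N, g x i ≤ ∫ t in ((m:ℝ))..((N-1:ℕ):ℝ), g x t := by
    intro m hm hcm hmN
    have hmN' : m ≤ N - 1 := by omega
    have hanti : AntitoneOn (g x) (Icc ((m:ℝ)) ((N-1:ℕ):ℝ)) :=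
      g_anti_Icc hx (by exact_mod_cast Nat.lt_of_lt_of_le Nat.zero_lt_one hm) hcm
    have := AntitoneOn.sum_le_integral_Ico hmN' hanti
    calc ∑ i ∈ Finset.Ico (m+1) N, g x i
        = ∑ i ∈ Finset.Ico (m+1) ((N-1)+1), g x i := by
          rw [Nat.sub_add_cancel (by omega : 1 ≤ N)]
      _ = ∑ i ∈ Finset.Ico m (N-1), g x ((i+1 : ℕ):ℝ) :=
          (Finset.sum_Ico_add' (fun j : ℕ => g x (j:ℝ)) m (N-1) 1).symm
      _ ≤ ∫ t in ((m:ℝ))..((N-1:ℕ):ℝ), g x t := this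
  rcases Nat.eq_zero_or_pos K with hK0 | hK1
  -- case c < 1
  · have hc1 : c < 1 := Nat.floor_eq_zero.1 hK0
    have hsplit : ∑ i ∈ Finset.range N, g x i
        = g x 0 + g x 1 + ∑ i ∈ Finset.Ico 2 N, g x i := by
      rw [Finset.range_eq_Ico,
        ← Finset.sum_Ico_consecutive (fun i : ℕ => g x i) (by omega : (0:ℕ) ≤ 2) (by omega : 2 ≤ N),
        show Finset.Ico 0 2 = {0, 1} from rfl]
      simp [Finset.sum_pair]
    rw [hsplit, g_zero]
    have h1 : g x 1 ≤ M := g_le_M hx 1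
    have h2 : ∑ i ∈ Finset.Ico 2 N, g x i ≤ ∫ t in ((1:ℕ):ℝ)..((N-1:ℕ):ℝ), g x t := by
      have := tail 1 le_rfl (by exact_mod_cast hc1.le) (by omega)
      simpa using this
    have h3 : ∫ t in (1:ℝ)..((N-1:ℕ):ℝ), g x t ≤ I := by
      apply int_le_I hx (by norm_num)
      have : (1:ℕ) ≤ N - 1 := by omega
      exact_mod_cast this
    push_cast at h2
    linarith
  -- case 1 ≤ K
  · have hK1' : (1:ℝ) ≤ (K:ℝ) := by exact_mod_cast hK1
    have hsplit : ∑ i ∈ Finset.range N, g x i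
        = g x 0 + ∑ i ∈ Finset.Ico 1 K, g x i + (g x K + g x (K+1))
          + ∑ i ∈ Finset.Ico (K+2) N, g x i := by
      rw [Finset.range_eq_Ico,
        ← Finset.sum_Ico_consecutive (fun i : ℕ => g x i) (by omega : (0:ℕ) ≤ 1) (by omega : 1 ≤ N),
        ← Finset.sum_Ico_consecutive (fun i : ℕ => g x i) (by omega : (1:ℕ) ≤ K) (by omega : K ≤ N),
        ← Finset.sum_Ico_consecutive (fun i : ℕ => g x i) (by omega : (K:ℕ) ≤ K+2) (by omega : K+2 ≤ N)]
      have e1 : Finset.Ico 0 1 = {0} := rfl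
      have e2 : ∑ i ∈ Finset.Ico K (K+2), g x i = g x K + g x (K+1) := by
        rw [show K + 2 = (K+1)+1 from rfl, Finset.sum_Ico_succ_top (by omega),
          Finset.sum_Ico_succ_top (by omega), Finset.Ico_self, Finset.sum_empty]
        push_cast
        ring
      rw [e1, e2]
      simp
      ring
    rw [hsplit, g_zero]
    have hup : ∑ i ∈ Finset.Ico 1 K, g x i ≤ ∫ t in ((1:ℕ):ℝ)..((K:ℕ):ℝ), g x t := by
      apply MonotoneOn.sum_le_integral_Ico hK1
      exact_mod_cast g_mono_Icc hx (by norm_num) hKc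
    have hmid : g x K + g x (K+1) ≤ M + ∫ t in ((K:ℝ))..((K:ℝ)+1), g x t := by
      have := middle hx (by linarith : (0:ℝ) < (K:ℝ)) hKc hcK1.le
      push_cast
      push_cast at this
      linarith
    have hdown : ∑ i ∈ Finset.Ico (K+2) N, g x i
        ≤ ∫ t in (((K+1:ℕ)):ℝ)..((N-1:ℕ):ℝ), g x t := by
      exact tail (K+1) (by omega) (by push_cast; linarith) (by omega)
    -- combine integrals
    have j1 : IntervalIntegrable (g x) volume 1 K := g_intInt (by norm_num) hK1'
    have j2 : IntervalIntegrable (g x) volume (K:ℝ) ((K:ℝ)+1) :=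
      g_intInt (by linarith) (by linarith)
    have j3 : IntervalIntegrable (g x) volume ((K:ℝ)+1) ((N-1:ℕ):ℝ) := by
      apply g_intInt (by linarith)
      have : (K + 1 : ℕ) ≤ N - 1 := by omega
      calc (K:ℝ)+1 = ((K+1:ℕ):ℝ) := by push_cast; ring
        _ ≤ ((N-1:ℕ):ℝ) := by exact_mod_cast this
    have hcomb : (∫ t in (1:ℝ)..(K:ℝ), g x t) + (∫ t in ((K:ℝ))..((K:ℝ)+1), g x t)
        + (∫ t in ((K:ℝ)+1)..((N-1:ℕ):ℝ), g x t) = ∫ t in (1:ℝ)..((N-1:ℕ):ℝ), g x t := by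
      rw [intervalIntegral.integral_add_adjacent_intervals j1 j2,
        intervalIntegral.integral_add_adjacent_intervals (j1.trans j2) j3]
    have hIle : ∫ t in (1:ℝ)..((N-1:ℕ):ℝ), g x t ≤ I := by
      apply int_le_I hx (by norm_num)
      have : (1:ℕ) ≤ N - 1 := by omega
      exact_mod_cast this
    push_cast at hup hdown
    linarith
end RieszAux


namespace RieszAux
open Real Set MeasureTheory

lemma summable_terms {x : ℝ} (hx : 0 < x) :
    Summable (fun n : ℕ => mu n / (n:ℝ)^2 * Real.exp (-x / (n:ℝ)^2)) := by
  refine Summable.of_abs (Summable.of_nonneg_of_le (fun n => abs_nonneg _) (fun n => ?_)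
    (Real.summable_nat_pow_inv.2 one_lt_two))
  rcases Nat.eq_zero_or_pos n with rfl | hn
  · simp [mu_zero]
  · have hn0 : (0:ℝ) < (n:ℝ) := by exact_mod_cast hn
    rw [abs_mul]
    calc |mu n / (n:ℝ)^2| * |Real.exp (-x / (n:ℝ)^2)|
        ≤ ((n:ℝ)^2)⁻¹ * 1 := by
          apply mul_le_mul (abs_term_le le_rfl n) ?_ (abs_nonneg _) (by positivity)
          rw [abs_of_nonneg (Real.exp_nonneg _)]
          exact g_exp_le_one hx hn0
      _ = ((n:ℝ)^2)⁻¹ := mul_one _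

lemma term_diff {x y : ℝ} (hx : 0 < x) (hxy : x < y) (n : ℕ) :
    |mu n / (n:ℝ)^2 * Real.exp (-x / (n:ℝ)^2) - mu n / (n:ℝ)^2 * Real.exp (-y / (n:ℝ)^2)|
      ≤ (y - x) * g x n := by
  rcases Nat.eq_zero_or_pos n with rfl | hn
  · simp [mu_zero, g_zero]
  · have hn0 : (0:ℝ) < (n:ℝ) := by exact_mod_cast hn
    rw [← mul_sub, abs_mul]
    have hsub : Real.exp (-x / (n:ℝ)^2) - Real.exp (-y / (n:ℝ)^2)
        = Real.exp (-x / (n:ℝ)^2) * (1 - Real.exp (-((y - x) / (n:ℝ)^2))) := by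
      rw [mul_sub, mul_one, ← Real.exp_add]
      congr 2
      field_simp
      ring
    have h0 : 0 ≤ 1 - Real.exp (-((y - x) / (n:ℝ)^2)) := by
      have : Real.exp (-((y - x) / (n:ℝ)^2)) ≤ 1 := by
        apply Real.exp_le_one_iff.2
        simp only [neg_nonpos]
        apply div_nonneg (by linarith) (by positivity)
      linarith
    have h1 : 1 - Real.exp (-((y - x) / (n:ℝ)^2)) ≤ (y - x) / (n:ℝ)^2 := by
      have := Real.add_one_le_exp (-((y - x) / (n:ℝ)^2))
      linarith
    have habs : |Real.exp (-x / (n:ℝ)^2) - Real.exp (-y / (n:ℝ)^2)|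
        ≤ Real.exp (-x / (n:ℝ)^2) * ((y - x) / (n:ℝ)^2) := by
      rw [hsub, abs_mul, abs_of_nonneg (Real.exp_nonneg _), abs_of_nonneg h0]
      exact mul_le_mul_of_nonneg_left h1 (Real.exp_nonneg _)
    calc |mu n / (n:ℝ)^2| * |Real.exp (-x / (n:ℝ)^2) - Real.exp (-y / (n:ℝ)^2)|
        ≤ ((n:ℝ)^2)⁻¹ * (Real.exp (-x / (n:ℝ)^2) * ((y - x) / (n:ℝ)^2)) :=
          mul_le_mul (abs_term_le le_rfl n) habs (abs_nonneg _) (by positivity)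
      _ = (y - x) * (((n:ℝ)^4)⁻¹ * Real.exp (-x / (n:ℝ)^2)) := by
          field_simp
      _ = (y - x) * g x n := by rw [g]

lemma main_diff {x y : ℝ} (hx : 0 < x) (hxy : x < y) :
    |RieszR x / x - RieszR y / y| ≤ (y - x) * ∑' n : ℕ, g x n := by
  have hy : 0 < y := hx.trans hxy
  rw [riesz_repr hx, riesz_repr hy]
  have h1 := summable_terms hx
  have h2 := summable_terms hy
  rw [← Summable.tsum_sub h1 h2]
  have hd : Summable (fun n : ℕ =>
      mu n / (n:ℝ)^2 * Real.exp (-x / (n:ℝ)^2) - mu n / (n:ℝ)^2 * Real.exp (-y / (n:ℝ)^2)) :=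
    h1.sub h2
  calc |∑' n : ℕ, (mu n / (n:ℝ)^2 * Real.exp (-x / (n:ℝ)^2)
          - mu n / (n:ℝ)^2 * Real.exp (-y / (n:ℝ)^2))|
      ≤ ∑' n : ℕ, |mu n / (n:ℝ)^2 * Real.exp (-x / (n:ℝ)^2)
          - mu n / (n:ℝ)^2 * Real.exp (-y / (n:ℝ)^2)| := by
        have := norm_tsum_le_tsum_norm (f := fun n : ℕ =>
          mu n / (n:ℝ)^2 * Real.exp (-x / (n:ℝ)^2)
            - mu n / (n:ℝ)^2 * Real.exp (-y / (n:ℝ)^2)) hd.abs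
        simpa using this
    _ ≤ ∑' n : ℕ, (y - x) * g x n :=
        Summable.tsum_le_tsum (term_diff hx hxy) hd.abs ((summable_g hx).mul_left _)
    _ = (y - x) * ∑' n : ℕ, g x n := tsum_mul_left

lemma sum_bound {x : ℝ} (hx : 0 < x) :
    ∑' n : ℕ, g x n
      ≤ Real.sqrt Real.pi / 4 * x ^ (-(3:ℝ)/2) + 4 / Real.exp 2 * x ^ (-(2:ℝ)) := by
  have h := sum_g_le hx
  rw [g_integral hx] at h
  have e : 4 * Real.exp (-2) / x ^ 2 = 4 / Real.exp 2 * x ^ (-(2:ℝ)) := by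
    rw [Real.exp_neg, show (-(2:ℝ)) = -((2:ℕ):ℝ) by norm_num, rpow_neg_nat hx 2]
    field_simp
  rw [e] at h
  exact h

end RieszAux

theorem stmt13 :
    (∀ x y : ℝ, 0 < x → x < y →
      |RieszR x / x - RieszR y / y| ≤
        (y - x) * (Real.sqrt Real.pi / 4 * x ^ (-(3 : ℝ) / 2)
          + 4 / Real.exp 2 * x ^ (-(2 : ℝ)))) ∧
    ∃ A : ℝ, ∀ x y : ℝ, 0 < x → x < y →
      |RieszR x / x - RieszR y / y| ≤ A * (y - x) * x ^ (-(3 : ℝ) / 2) := by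
  open RieszAux in
  constructor
  · intro x y hx hxy
    calc |RieszR x / x - RieszR y / y| ≤ (y - x) * ∑' n : ℕ, g x n := main_diff hx hxy
      _ ≤ (y - x) * (Real.sqrt Real.pi / 4 * x ^ (-(3 : ℝ) / 2)
            + 4 / Real.exp 2 * x ^ (-(2 : ℝ))) :=
          mul_le_mul_of_nonneg_left (sum_bound hx) (by linarith)
  · set Z : ℝ := ∑' n : ℕ, (((n:ℝ)) ^ 4)⁻¹ with hZ
    have hZ0 : 0 ≤ Z := tsum_nonneg fun n => by positivity
    have hπ : 0 ≤ Real.sqrt Real.pi / 4 := by positivity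
    have he : 0 ≤ 4 / Real.exp 2 := by positivity
    refine ⟨Real.sqrt Real.pi / 4 + 4 / Real.exp 2 + Z, fun x y hx hxy => ?_⟩
    set A := Real.sqrt Real.pi / 4 + 4 / Real.exp 2 + Z with hA
    have hA0 : 0 ≤ A := by positivity
    rcases le_or_gt 1 x with h1x | hx1
    · -- x ≥ 1 : use the explicit bound
      have hb : x ^ (-(2:ℝ)) ≤ x ^ (-(3:ℝ)/2) :=
        Real.rpow_le_rpow_of_exponent_le h1x (by norm_num)
      have hr0 : (0:ℝ) ≤ x ^ (-(3:ℝ)/2) := Real.rpow_nonneg (by linarith) _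
      calc |RieszR x / x - RieszR y / y|
          ≤ (y - x) * (Real.sqrt Real.pi / 4 * x ^ (-(3 : ℝ) / 2)
              + 4 / Real.exp 2 * x ^ (-(2 : ℝ))) := by
            calc |RieszR x / x - RieszR y / y| ≤ (y - x) * ∑' n : ℕ, g x n := main_diff hx hxy
              _ ≤ _ := mul_le_mul_of_nonneg_left (sum_bound hx) (by linarith)
        _ ≤ (y - x) * ((Real.sqrt Real.pi / 4 + 4 / Real.exp 2) * x ^ (-(3:ℝ)/2)) := by
            apply mul_le_mul_of_nonneg_left ?_ (by linarith)
            have := mul_le_mul_of_nonneg_left hb he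
            nlinarith
        _ ≤ A * (y - x) * x ^ (-(3:ℝ)/2) := by
            rw [hA]
            nlinarith [mul_nonneg (mul_nonneg hZ0 (by linarith : (0:ℝ) ≤ y - x)) hr0]
    · -- x < 1 : use the crude bound
      have hZle : ∑' n : ℕ, g x n ≤ Z :=
        Summable.tsum_le_tsum (g_le_inv_pow hx) (summable_g hx)
          (Real.summable_nat_pow_inv.2 (by norm_num))
      have hr1 : (1:ℝ) ≤ x ^ (-(3:ℝ)/2) := by
        apply Real.one_le_rpow_of_pos_of_le_one_of_nonpos hx hx1.le
        norm_num
      calc |RieszR x / x - RieszR y / y|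
          ≤ (y - x) * ∑' n : ℕ, g x n := main_diff hx hxy
        _ ≤ (y - x) * Z := mul_le_mul_of_nonneg_left hZle (by linarith)
        _ ≤ A * (y - x) * x ^ (-(3:ℝ)/2) := by
            have hZA : Z ≤ A * x ^ (-(3:ℝ)/2) := by
              calc Z ≤ A := by rw [hA]; linarith
                _ = A * 1 := (mul_one A).symm
                _ ≤ A * x ^ (-(3:ℝ)/2) := mul_le_mul_of_nonneg_left hr1 hA0
            calc (y - x) * Z ≤ (y - x) * (A * x ^ (-(3:ℝ)/2)) :=
                  mul_le_mul_of_nonneg_left hZA (by linarith)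
              _ = A * (y - x) * x ^ (-(3:ℝ)/2) := by ring
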